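/- Let $Y \in \mathbb{R}^{n \times m}$, let $u \in \mathbb{R}^m$ be the all-ones vector, $\mu_Y = \frac{1}{m} Y u$ the empirical mean, and $C_Y = \frac{1}{m}(YY^\top - \frac{1}{m} Yuu^\top Y^\top)$ the empirical covariance, assumed positive definite. Then the function $(\Theta, \beta) \mapsto \|\Theta Y + \beta u^\top - Y\|_F^2 + 2m\sigma^2\,\mathrm{tr}(\Theta)$ attains its global minimum at $\hat{\Theta}_1 = (C_Y - \sigma^2 I_n) C_Y^{-1}$ and $\hat{\beta}_1 = (I_n - \hat{\Theta}_1)\mu_Y$. -/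

import Mathlib

open MeasureTheory ProbabilityTheory Matrix

noncomputable def frobSq {n m : ℕ} (M : Matrix (Fin n) (Fin m) ℝ) : ℝ :=
  ∑ i, ∑ j, (M i j) ^ 2

def onesVec (m : ℕ) : Fin m → ℝ := fun _ => 1

noncomputable def covM {n m : ℕ} (Y : Matrix (Fin n) (Fin m) ℝ) : Matrix (Fin n) (Fin n) ℝ :=
  (m : ℝ)⁻¹ • (Y * Yᵀ - (m : ℝ)⁻¹ • (Y * vecMulVec (onesVec m) (onesVec m) * Yᵀ))

noncomputable def meanV {n m : ℕ} (Y : Matrix (Fin n) (Fin m) ℝ) : Fin n → ℝ :=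
  (m : ℝ)⁻¹ • Y.mulVec (onesVec m)

lemma frobSq_eq_trace {n m : ℕ} (M : Matrix (Fin n) (Fin m) ℝ) :
    frobSq M = Matrix.trace (M * Mᵀ) := by
  simp [frobSq, Matrix.trace, Matrix.mul_apply, Matrix.diag, sq]

lemma mul_vecMulVec' {n m : ℕ} (A : Matrix (Fin n) (Fin n) ℝ) (v : Fin n → ℝ) (w : Fin m → ℝ) :
    A * vecMulVec v w = vecMulVec (A.mulVec v) w := by
  ext i j
  simp [Matrix.mul_apply, Matrix.vecMulVec_apply, Matrix.mulVec, dotProduct,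
    Finset.sum_mul, mul_assoc]

lemma vecMulVec_add_left' {n m : ℕ} (a b : Fin n → ℝ) (w : Fin m → ℝ) :
    vecMulVec (a + b) w = vecMulVec a w + vecMulVec b w := by
  ext i j; simp [Matrix.vecMulVec_apply, add_mul]

lemma frobSq_add_vecMulVec {n m : ℕ} (A : Matrix (Fin n) (Fin m) ℝ) (v : Fin n → ℝ)
    (hA : A.mulVec (onesVec m) = 0) :
    frobSq (A + vecMulVec v (onesVec m)) = frobSq A + (m : ℝ) * ∑ i, v i ^ 2 := by
  simp only [frobSq, Matrix.add_apply, Matrix.vecMulVec_apply, onesVec, mul_one]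
  rw [Finset.mul_sum, ← Finset.sum_add_distrib]
  refine Finset.sum_congr rfl fun i _ => ?_
  have h0 : ∑ j, A i j = 0 := by
    have := congrFun hA i
    simpa [Matrix.mulVec, dotProduct, onesVec] using this
  have hsum : ∑ j, (A i j + v i) ^ 2
      = (∑ j, A i j ^ 2) + 2 * v i * (∑ j, A i j) + (m : ℝ) * v i ^ 2 := by
    have hterm : ∀ j ∈ Finset.univ, (A i j + v i) ^ 2
        = A i j ^ 2 + (2 * v i) * A i j + v i ^ 2 := fun j _ => by ring
    rw [Finset.sum_congr rfl hterm, Finset.sum_add_distrib, Finset.sum_add_distrib,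
      ← Finset.mul_sum, Finset.sum_const, Finset.card_univ, Fintype.card_fin, nsmul_eq_mul]
  rw [hsum, h0]
  ring

lemma trace_conj_nonneg {n : ℕ} {C : Matrix (Fin n) (Fin n) ℝ} (hC : C.PosSemidef)
    (B : Matrix (Fin n) (Fin n) ℝ) : 0 ≤ Matrix.trace (B * C * Bᵀ) := by
  rw [Matrix.trace]
  refine Finset.sum_nonneg fun i _ => ?_
  have h := hC.dotProduct_mulVec_nonneg (B i)
  have heq : (B * C * Bᵀ) i i = star (B i) ⬝ᵥ C *ᵥ (B i) := by
    simp only [Matrix.mul_apply, Matrix.transpose_apply, dotProduct, Matrix.mulVec,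
      star_trivial]
    simp only [Finset.sum_mul, Finset.mul_sum]
    rw [Finset.sum_comm]
    exact Finset.sum_congr rfl fun j _ => Finset.sum_congr rfl fun k _ => by ring
  simpa [heq] using h

theorem stmt8 {n m : ℕ} (Y : Matrix (Fin n) (Fin m) ℝ) (σ : ℝ)
    (hC : (covM Y).PosDef) :
    ∀ (Θ : Matrix (Fin n) (Fin n) ℝ) (β : Fin n → ℝ),
      frobSq ((covM Y - σ ^ 2 • (1 : Matrix (Fin n) (Fin n) ℝ)) * (covM Y)⁻¹ * Y
            + vecMulVec (((1 : Matrix (Fin n) (Fin n) ℝ)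
                - (covM Y - σ ^ 2 • (1 : Matrix (Fin n) (Fin n) ℝ)) * (covM Y)⁻¹).mulVec
              (meanV Y)) (onesVec m) - Y)
          + 2 * (m : ℝ) * σ ^ 2 *
            Matrix.trace ((covM Y - σ ^ 2 • (1 : Matrix (Fin n) (Fin n) ℝ)) * (covM Y)⁻¹)
        ≤ frobSq (Θ * Y + vecMulVec β (onesVec m) - Y)
          + 2 * (m : ℝ) * σ ^ 2 * Matrix.trace Θ := by
  intro Θ β
  rcases Nat.eq_zero_or_pos n with hn | hn
  · subst hn
    simp [frobSq, Matrix.trace]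
  have hm : (m : ℝ) ≠ 0 := by
    intro h0
    have h1 : covM Y = 0 := by simp [covM, h0]
    have h2 := hC.det_pos
    rw [h1] at h2
    haveI : Nonempty (Fin n) := Fin.pos_iff_nonempty.mp hn
    simp [Matrix.det_zero] at h2
  set C := covM Y with hCdef
  set μ := meanV Y with hμdef
  have hdet : IsUnit C.det := isUnit_iff_ne_zero.mpr hC.det_pos.ne'
  have hCD : C * C⁻¹ = 1 := Matrix.mul_nonsing_inv _ hdet
  have hDC : C⁻¹ * C = 1 := Matrix.nonsing_inv_mul _ hdet
  have hCsym : Cᵀ = C := by simpa using hC.1.eq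
  have hDsym : (C⁻¹)ᵀ = C⁻¹ := by rw [Matrix.transpose_nonsing_inv, hCsym]
  set Z : Matrix (Fin n) (Fin m) ℝ := Y - vecMulVec μ (onesVec m) with hZdef
  have hZu : Z.mulVec (onesVec m) = 0 := by
    funext i
    simp only [hZdef, Matrix.sub_mulVec, Pi.sub_apply, Pi.zero_apply]
    have h1 : (vecMulVec μ (onesVec m)).mulVec (onesVec m) i = (m : ℝ) * μ i := by
      simp [Matrix.mulVec, dotProduct, Matrix.vecMulVec_apply, onesVec, Finset.card_univ,
        mul_comm]
    have h2 : Y.mulVec (onesVec m) i = (m : ℝ) * μ i := by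
      simp only [hμdef, meanV, Pi.smul_apply, smul_eq_mul]
      field_simp
    rw [h1, h2, sub_self]
  have hZZ : Z * Zᵀ = (m : ℝ) • C := by
    ext i j
    simp only [hZdef, hCdef, hμdef, Matrix.mul_apply, Matrix.transpose_apply,
      Matrix.sub_apply, Matrix.vecMulVec_apply, onesVec, mul_one, covM,
      Matrix.smul_apply, smul_eq_mul, meanV, Pi.smul_apply, Matrix.mulVec, dotProduct]
    have expand : ∀ x : Fin m, (Y i x - (↑m)⁻¹ * ∑ t, Y i t) * (Y j x - (↑m)⁻¹ * ∑ t, Y j t)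
        = Y i x * Y j x - ((↑m)⁻¹ * ∑ t, Y i t) * Y j x - ((↑m)⁻¹ * ∑ t, Y j t) * Y i x
          + ((↑m)⁻¹ * ∑ t, Y i t) * ((↑m)⁻¹ * ∑ t, Y j t) := fun x => by ring
    rw [Finset.sum_congr rfl (fun x _ => expand x), Finset.sum_add_distrib,
      Finset.sum_sub_distrib, Finset.sum_sub_distrib, ← Finset.mul_sum, ← Finset.mul_sum,
      ← Finset.mul_sum, Finset.sum_const, Finset.card_univ, Fintype.card_fin, nsmul_eq_mul]
    field_simp
    rw [← Finset.mul_sum]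
    ring
  -- main identity
  have key : ∀ (Θ' : Matrix (Fin n) (Fin n) ℝ) (β' : Fin n → ℝ),
      frobSq (Θ' * Y + vecMulVec β' (onesVec m) - Y)
          + 2 * (m : ℝ) * σ ^ 2 * Matrix.trace Θ'
        = (m : ℝ) * Matrix.trace ((Θ' - 1 + σ ^ 2 • C⁻¹) * C * (Θ' - 1 + σ ^ 2 • C⁻¹)ᵀ)
          + (m : ℝ) * (∑ i, ((Θ' - 1).mulVec μ + β') i ^ 2)
          + (2 * (m : ℝ) * σ ^ 2 * n - (m : ℝ) * (σ ^ 2 * σ ^ 2) * Matrix.trace C⁻¹) := by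
    intro Θ' β'
    have hdecomp : Θ' * Y + vecMulVec β' (onesVec m) - Y
        = (Θ' - 1) * Z + vecMulVec ((Θ' - 1).mulVec μ + β') (onesVec m) := by
      rw [hZdef, Matrix.mul_sub, mul_vecMulVec', vecMulVec_add_left', Matrix.sub_mul,
        Matrix.one_mul]
      abel
    have hZu' : ((Θ' - 1) * Z).mulVec (onesVec m) = 0 := by
      rw [← Matrix.mulVec_mulVec, hZu, Matrix.mulVec_zero]
    rw [hdecomp, frobSq_add_vecMulVec _ _ hZu']
    rw [frobSq_eq_trace]
    have hfs : ((Θ' - 1) * Z) * ((Θ' - 1) * Z)ᵀ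
        = (m : ℝ) • ((Θ' - 1) * C * (Θ' - 1)ᵀ) := by
      rw [Matrix.transpose_mul, ← Matrix.mul_assoc, Matrix.mul_assoc (Θ' - 1) Z Zᵀ, hZZ,
        Matrix.mul_smul, Matrix.smul_mul]
    rw [hfs, Matrix.trace_smul]
    set Δ := Θ' - 1 with hΔ
    have e1 : Δ * C * (σ ^ 2 • C⁻¹) = σ ^ 2 • Δ := by
      rw [Matrix.mul_smul, Matrix.mul_assoc, hCD, Matrix.mul_one]
    have e2 : (σ ^ 2 • C⁻¹) * C * Δᵀ = σ ^ 2 • Δᵀ := by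
      rw [Matrix.smul_mul, hDC, Matrix.smul_mul, Matrix.one_mul]
    have e3 : (σ ^ 2 • C⁻¹) * C * (σ ^ 2 • C⁻¹) = (σ ^ 2 * σ ^ 2) • C⁻¹ := by
      rw [Matrix.smul_mul, hDC, Matrix.smul_mul, Matrix.one_mul, smul_smul]
    have hexp : (Δ + σ ^ 2 • C⁻¹) * C * (Δ + σ ^ 2 • C⁻¹)ᵀ
        = Δ * C * Δᵀ + σ ^ 2 • Δ + σ ^ 2 • Δᵀ + (σ ^ 2 * σ ^ 2) • C⁻¹ := by
      simp only [Matrix.transpose_add, Matrix.transpose_smul, hDsym, Matrix.mul_add,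
        Matrix.add_mul]
      rw [e1, e2, e3]
      abel
    have htr : Matrix.trace (Δ * C * Δᵀ)
        = Matrix.trace ((Δ + σ ^ 2 • C⁻¹) * C * (Δ + σ ^ 2 • C⁻¹)ᵀ)
          - 2 * σ ^ 2 * Matrix.trace Δ - (σ ^ 2 * σ ^ 2) * Matrix.trace C⁻¹ := by
      rw [hexp]
      simp only [Matrix.trace_add, Matrix.trace_smul, Matrix.trace_transpose, smul_eq_mul]
      ring
    have hΘtr : Matrix.trace Θ' = Matrix.trace Δ + (n : ℝ) := by
      simp [hΔ, Matrix.trace_sub, Matrix.trace_one]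
    rw [htr, hΘtr]
    simp only [smul_eq_mul]
    ring
  have hβhat : ((((C - σ ^ 2 • (1 : Matrix (Fin n) (Fin n) ℝ)) * C⁻¹) - 1).mulVec μ
      + ((1 : Matrix (Fin n) (Fin n) ℝ)
          - (C - σ ^ 2 • (1 : Matrix (Fin n) (Fin n) ℝ)) * C⁻¹).mulVec μ) = 0 := by
    rw [← Matrix.add_mulVec]
    have h0 : ((C - σ ^ 2 • (1 : Matrix (Fin n) (Fin n) ℝ)) * C⁻¹ - 1)
        + ((1 : Matrix (Fin n) (Fin n) ℝ) - (C - σ ^ 2 • 1) * C⁻¹) = 0 := by abel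
    rw [h0, Matrix.zero_mulVec]
  have hThat : (C - σ ^ 2 • (1 : Matrix (Fin n) (Fin n) ℝ)) * C⁻¹ - 1 + σ ^ 2 • C⁻¹ = 0 := by
    rw [Matrix.sub_mul, hCD, Matrix.smul_mul, Matrix.one_mul]
    abel
  rw [key Θ β, key ((C - σ ^ 2 • (1 : Matrix (Fin n) (Fin n) ℝ)) * C⁻¹)
      (((1 : Matrix (Fin n) (Fin n) ℝ)
        - (C - σ ^ 2 • (1 : Matrix (Fin n) (Fin n) ℝ)) * C⁻¹).mulVec μ)]
  rw [hThat, hβhat]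
  simp only [Matrix.zero_mul, Matrix.trace_zero, mul_zero, Pi.zero_apply,
    ne_eq, OfNat.ofNat_ne_zero, not_false_eq_true, zero_pow, Finset.sum_const_zero,
    add_zero, zero_add]
  have h1 : 0 ≤ (m : ℝ) * Matrix.trace ((Θ - 1 + σ ^ 2 • C⁻¹) * C * (Θ - 1 + σ ^ 2 • C⁻¹)ᵀ) :=
    mul_nonneg (Nat.cast_nonneg m) (trace_conj_nonneg hC.posSemidef _)
  have h2 : 0 ≤ (m : ℝ) * (∑ i, ((Θ - 1).mulVec μ + β) i ^ 2) :=
    mul_nonneg (Nat.cast_nonneg m) (Finset.sum_nonneg fun i _ => sq_nonneg _)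
  linarith
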